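/- Let K be a valued field of characteristic 0, C ⊆ K a finite set, and suppose |·|_eqc (coarsening by inverting ℚ) is a nontrivial valuation. Then two points x, x' ∈ K lie in the same ball |1|_eqc-next to C (i.e., rv_eqc(x−c) = rv_eqc(x'−c) for all c ∈ C, with respect to the coarsened valuation) if and only if for every positive integer m, rv_{|m|}(x−c) = rv_{|m|}(x'−c) for all c ∈ C (with respect to the original valuation). -/

import Mathlib

/-- The smallest subring of `K` containing the valuation ring and `ℚ`. -/
def eqcSubring (K : Type*) [Field K] {Γ₀ : Type*}
    [LinearOrderedCommGroupWithZero Γ₀] [Valued K Γ₀] : Subring K :=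
  Subring.closure (((Valued.v.integer : Subring K) : Set K) ∪ Set.range ((↑) : ℚ → K))


lemma val_natCast_le_one {K : Type*} [Field K] {Γ₀ : Type*}
    [LinearOrderedCommGroupWithZero Γ₀] [Valued K Γ₀] (n : ℕ) :
    Valued.v ((n : K)) ≤ 1 := by
  induction n with
  | zero => simp
  | succ n ih =>
    push_cast
    calc Valued.v ((n : K) + 1) ≤ max (Valued.v ((n:K))) (Valued.v (1:K)) :=
          Valuation.map_add _ _ _
      _ ≤ 1 := by simp [ih]

lemma val_intCast_le_one {K : Type*} [Field K] {Γ₀ : Type*}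
    [LinearOrderedCommGroupWithZero Γ₀] [Valued K Γ₀] (n : ℤ) :
    Valued.v ((n : K)) ≤ 1 := by
  induction n using Int.induction_on with
  | zero => simp
  | succ n _ => have := val_natCast_le_one (K := K) (Γ₀ := Γ₀) (n+1); push_cast at this ⊢; exact this
  | pred n _ =>
    have := val_natCast_le_one (K := K) (Γ₀ := Γ₀) (n+1)
    have h : ((-(n:ℤ)-1 : ℤ) : K) = -((n+1 : ℕ) : K) := by push_cast; ring
    rw [h, Valuation.map_neg]; push_cast at this ⊢; exact this

lemma mem_eqcSubring_iff {K : Type*} [Field K] [CharZero K] {Γ₀ : Type*}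
    [LinearOrderedCommGroupWithZero Γ₀] [Valued K Γ₀] (z : K) :
    z ∈ eqcSubring K ↔ ∃ m : ℕ, 0 < m ∧ Valued.v ((m : K) * z) ≤ 1 := by
  constructor
  · intro hz
    induction hz using Subring.closure_induction with
    | mem w hw =>
      rcases hw with hw | ⟨q, rfl⟩
      · exact ⟨1, one_pos, by simpa using (Valuation.mem_integer_iff _ _).mp hw⟩
      · refine ⟨q.den, q.pos, ?_⟩
        have hd : ((q.den : K)) ≠ 0 := Nat.cast_ne_zero.mpr q.den_nz
        have : ((q.den : K)) * (q : K) = ((q.num : ℤ) : K) := by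
          rw [Rat.cast_def, mul_comm, div_mul_cancel₀ _ hd]
        rw [this]; exact val_intCast_le_one _
    | one => exact ⟨1, one_pos, by simp⟩
    | zero => exact ⟨1, one_pos, by simp⟩
    | add a b _ _ ha hb =>
      obtain ⟨m, hm, hma⟩ := ha; obtain ⟨n, hn, hnb⟩ := hb
      refine ⟨m * n, Nat.mul_pos hm hn, ?_⟩
      have h : ((m*n : ℕ) : K) * (a + b) = (n:K) * ((m:K)*a) + (m:K) * ((n:K)*b) := by
        push_cast; ring
      rw [h]
      calc Valued.v ((n:K) * ((m:K)*a) + (m:K) * ((n:K)*b))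
          ≤ max (Valued.v ((n:K) * ((m:K)*a))) (Valued.v ((m:K) * ((n:K)*b))) :=
            Valuation.map_add _ _ _
        _ ≤ 1 := by
            apply max_le
            · rw [Valuation.map_mul]
              exact mul_le_one' (val_natCast_le_one n) hma
            · rw [Valuation.map_mul]
              exact mul_le_one' (val_natCast_le_one m) hnb
    | neg a _ ha => obtain ⟨m, hm, hma⟩ := ha; exact ⟨m, hm, by rwa [mul_neg, Valuation.map_neg]⟩
    | mul a b _ _ ha hb =>
      obtain ⟨m, hm, hma⟩ := ha; obtain ⟨n, hn, hnb⟩ := hb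
      refine ⟨m * n, Nat.mul_pos hm hn, ?_⟩
      have h : ((m*n : ℕ) : K) * (a * b) = ((m:K)*a) * ((n:K)*b) := by push_cast; ring
      rw [h, Valuation.map_mul]
      exact mul_le_one' hma hnb
  · rintro ⟨m, hm, hv⟩
    have hmK : ((m : K) : K) ≠ 0 := Nat.cast_ne_zero.mpr hm.ne'
    have h1 : (m : K) * z ∈ eqcSubring K :=
      Subring.subset_closure (Or.inl hv)
    have h2 : ((m : K)⁻¹ : K) ∈ eqcSubring K := by
      have : ((m : K)⁻¹ : K) = ((m : ℚ)⁻¹ : ℚ) := by push_cast; ring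
      exact this ▸ Subring.subset_closure (Or.inr ⟨(m : ℚ)⁻¹, rfl⟩)
    have := mul_mem h2 h1
    rwa [← mul_assoc, inv_mul_cancel₀ hmK, one_mul] at this

/-- Two points `x, x'` lie in the same ball `|1|_eqc`-next to a finite set `C` (i.e.
`|x − x'|_eqc < |x − c|_eqc` for each `c ∈ C`, for the coarsened valuation, with matching
zero fibers) iff for every positive integer `m` they lie in the same ball `|m|`-next to `C`
(i.e. `|x − x'| < |m|·|x − c|` for each `c ∈ C`). -/
theorem same_ball_eqc_iff {K : Type*} [Field K] [CharZero K] {Γ₀ : Type*}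
    [LinearOrderedCommGroupWithZero Γ₀] [Valued K Γ₀]
    (hproper : eqcSubring K ≠ ⊤) (C : Set K) (hC : C.Finite) (x x' : K) :
    (∀ c ∈ C, (x = c ↔ x' = c) ∧
        (x ≠ c → (x - x' = 0 ∨ (x - c) / (x - x') ∉ eqcSubring K))) ↔
    (∀ m : ℕ, 0 < m → ∀ c ∈ C, (x = c ↔ x' = c) ∧
        (x ≠ c → Valued.v (x - x') < Valued.v ((m : K)) * Valued.v (x - c))) := by
  constructor
  · intro h m hm c hc
    obtain ⟨hiff, h2⟩ := h c hc
    refine ⟨hiff, fun hxc => ?_⟩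
    have hmK : ((m : K)) ≠ 0 := Nat.cast_ne_zero.mpr hm.ne'
    have hb : Valued.v (x - c) ≠ 0 := by
      simpa using sub_ne_zero.mpr hxc
    have hpos : (0 : Γ₀) < Valued.v ((m : K)) * Valued.v (x - c) :=
      zero_lt_iff.mpr (mul_ne_zero (by simpa using hmK) hb)
    rcases h2 hxc with h0 | hnot
    · rw [h0]; simpa using hpos
    · by_cases hxx : x - x' = 0
      · rw [hxx]; simpa using hpos
      · have ha : Valued.v (x - x') ≠ 0 := by simpa using hxx
        rw [mem_eqcSubring_iff] at hnot
        push_neg at hnot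
        have := hnot m hm
        rw [Valuation.map_mul, map_div₀] at this
        rw [← mul_div_assoc, lt_div_iff₀ (zero_lt_iff.mpr ha), one_mul] at this
        exact this
  · intro h c hc
    obtain ⟨hiff, _⟩ := h 1 one_pos c hc
    refine ⟨hiff, fun hxc => ?_⟩
    by_cases hxx : x - x' = 0
    · exact Or.inl hxx
    · refine Or.inr fun hmem => ?_
      rw [mem_eqcSubring_iff] at hmem
      obtain ⟨m, hm, hle⟩ := hmem
      have hlt := (h m hm c hc).2 hxc
      have ha : Valued.v (x - x') ≠ 0 := by simpa using hxx
      rw [Valuation.map_mul, map_div₀, ← mul_div_assoc,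
        div_le_one₀ (zero_lt_iff.mpr ha)] at hle
      exact absurd hlt (not_lt.mpr hle)
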